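/- arXiv:1401.5604 — 2 statements merged into one kernel-verified Lean document; each statement's English description precedes it below -/
import Mathlib

section
/- Let f: A → B and g: C → B be group homomorphisms with sections r: B → A and s: B → C (so f∘r = id_B = g∘s), and let α: A → D, γ: C → D be group homomorphisms with α∘r = γ∘s =: β. Let k: X → A be the kernel inclusion of f and l: Y → C the kernel inclusion of g. If the images of α∘k and γ∘l commute elementwise in D (i.e., α(k(x))·γ(l(y)) = γ(l(y))·α(k(x)) for all x ∈ X, y ∈ Y), then there exists a group homomorphism φ: A ×_B C → D (on the pullback {(a,c) | f(a)=g(c)}) such that φ(a, s(f(a))) = α(a) for all a ∈ A and φ(r(g(c)), c) = γ(c) for all c ∈ C. -/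
/-- The pullback `A ×_B C` of `f : A →* B` and `g : C →* B`,
as a subgroup of `A × C`. -/
def pullbackSubgroup {A B C : Type*} [Group A] [Group B] [Group C]
    (f : A →* B) (g : C →* B) : Subgroup (A × C) where
  carrier := {p | f p.1 = g p.2}
  one_mem' := by simp
  mul_mem' := by
    intro a b ha hb
    show f (a.1 * b.1) = g (a.2 * b.2)
    rw [map_mul, map_mul, ha, hb]
  inv_mem' := by
    intro a ha
    show f a.1⁻¹ = g a.2⁻¹
    rw [map_inv, map_inv, ha]

theorem stmt0 {A B C D : Type*} [Group A] [Group B] [Group C] [Group D]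
    (f : A →* B) (g : C →* B) (r : B →* A) (s : B →* C)
    (hfr : ∀ b, f (r b) = b) (hgs : ∀ b, g (s b) = b)
    (α : A →* D) (γ : C →* D) (hβ : ∀ b, α (r b) = γ (s b))
    (hcomm : ∀ x y, f x = 1 → g y = 1 → Commute (α x) (γ y)) :
    ∃ φ : pullbackSubgroup f g →* D,
      (∀ p : pullbackSubgroup f g, (p : A × C).2 = s (f (p : A × C).1) →
        φ p = α (p : A × C).1) ∧
      (∀ p : pullbackSubgroup f g, (p : A × C).1 = r (g (p : A × C).2) →
        φ p = γ (p : A × C).2) := by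
  have key : ∀ a c, f a = g c → ∀ a' c', f a' = g c' →
      α (a * a' * (r (f (a * a')))⁻¹) * γ (c * c') =
      (α (a * (r (f a))⁻¹) * γ c) * (α (a' * (r (f a'))⁻¹) * γ c') := by
    intro a c h a' c' h'
    have hw : f (r (f a) * (a' * (r (f a'))⁻¹) * (r (f a))⁻¹) = 1 := by
      simp [hfr]
    have hv : g (c * (s (g c))⁻¹) = 1 := by simp [hgs]
    have hcw := hcomm _ _ hw hv
    have e1 : a * a' * (r (f (a * a')))⁻¹ =
        (a * (r (f a))⁻¹) * (r (f a) * (a' * (r (f a'))⁻¹) * (r (f a))⁻¹) := by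
      rw [map_mul, map_mul]; group
    have e2 : c = (c * (s (g c))⁻¹) * s (f a) := by rw [h]; group
    have hα : α (r (f a) * (a' * (r (f a'))⁻¹) * (r (f a))⁻¹) =
        γ (s (f a)) * α (a' * (r (f a'))⁻¹) * (γ (s (f a)))⁻¹ := by
      rw [α.map_mul (r (f a) * (a' * (r (f a'))⁻¹)) (r (f a))⁻¹,
        α.map_mul (r (f a)) (a' * (r (f a'))⁻¹), map_inv, hβ]
    have main : α (r (f a) * (a' * (r (f a'))⁻¹) * (r (f a))⁻¹) * γ c =
        γ c * α (a' * (r (f a'))⁻¹) := by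
      calc α (r (f a) * (a' * (r (f a'))⁻¹) * (r (f a))⁻¹) * γ c
          = α (r (f a) * (a' * (r (f a'))⁻¹) * (r (f a))⁻¹) *
              (γ (c * (s (g c))⁻¹) * γ (s (f a))) := by
            rw [← γ.map_mul (c * (s (g c))⁻¹) (s (f a)), ← e2]
        _ = γ (c * (s (g c))⁻¹) *
              (α (r (f a) * (a' * (r (f a'))⁻¹) * (r (f a))⁻¹) * γ (s (f a))) := by
            rw [← mul_assoc, hcw.eq, mul_assoc]
        _ = γ (c * (s (g c))⁻¹) *
              (γ (s (f a)) * α (a' * (r (f a'))⁻¹) * (γ (s (f a)))⁻¹ * γ (s (f a))) := by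
            rw [hα]
        _ = γ (c * (s (g c))⁻¹) * γ (s (f a)) * α (a' * (r (f a'))⁻¹) := by
            group
        _ = γ c * α (a' * (r (f a'))⁻¹) := by
            rw [← γ.map_mul (c * (s (g c))⁻¹) (s (f a)), ← e2]
    rw [e1, α.map_mul (a * (r (f a))⁻¹) (r (f a) * (a' * (r (f a'))⁻¹) * (r (f a))⁻¹),
      γ.map_mul c c']
    calc α (a * (r (f a))⁻¹) * α (r (f a) * (a' * (r (f a'))⁻¹) * (r (f a))⁻¹) *
          (γ c * γ c')
        = α (a * (r (f a))⁻¹) *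
            (α (r (f a) * (a' * (r (f a'))⁻¹) * (r (f a))⁻¹) * γ c) * γ c' := by
          group
      _ = α (a * (r (f a))⁻¹) * (γ c * α (a' * (r (f a'))⁻¹)) * γ c' := by rw [main]
      _ = α (a * (r (f a))⁻¹) * γ c * (α (a' * (r (f a'))⁻¹) * γ c') := by group
  refine ⟨MonoidHom.mk'
      (fun p => α ((p : A × C).1 * (r (f (p : A × C).1))⁻¹) * γ (p : A × C).2) ?_,
      ?_, ?_⟩
  · rintro ⟨⟨a, c⟩, hp⟩ ⟨⟨a', c'⟩, hp'⟩
    exact key a c hp a' c' hp'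
  · rintro ⟨⟨a, c⟩, hp⟩ h2
    simp only at h2
    show α (a * (r (f a))⁻¹) * γ c = α a
    rw [h2, ← hβ, ← α.map_mul]
    simp
  · rintro ⟨⟨a, c⟩, hp⟩ h1
    simp only at h1
    show α (a * (r (f a))⁻¹) * γ c = γ c
    have hra : r (f a) = a := by rw [show f a = g c from hp, ← h1]
    rw [hra]
    simp
end

section
/- In a meet-semilattice, consider the Heyting semilattices A = D = {0, 1/2, 1} (linear order), B = {0,1}, and C the four-element Boolean algebra {0, a, b, 1}, with maps f: A → B sending 0↦0, 1/2↦1, 1↦1; g: C → B sending 0↦0, a↦0, b↦1, 1↦1; r = s: B → A (resp. B → C) the evident order embeddings with r(0)=0, r(1)=1, s(0)=0, s(1)=1; α = id on A; γ: C → D sending 0↦0 and a,b,1 ↦ 1. Then there is no monotone (order-preserving) map φ: A ×_B C → D satisfying φ(a, s(f(a))) = α(a) and φ(r(g(c)), c) = γ(c), where A ×_B C = {(p,q) | f(p) = g(q)}. -/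
namespace Stmt13

/-- `A = D` is the three-element chain `{0, 1/2, 1}`, modelled as `Fin 3`. -/
abbrev A := Fin 3
/-- `B` is the two-element chain, modelled as `Fin 2`. -/
abbrev B := Fin 2
/-- `C` is the four-element Boolean algebra, modelled as `Bool × Bool`,
with `0 = (false, false)`, `a = (true, false)`, `b = (false, true)`, `1 = (true, true)`. -/
abbrev C := Bool × Bool

/-- `f : A → B`, `0 ↦ 0`, `1/2 ↦ 1`, `1 ↦ 1`. -/
def f : A → B := fun p => if p = 0 then 0 else 1
/-- `g : C → B`, `0 ↦ 0`, `a ↦ 0`, `b ↦ 1`, `1 ↦ 1`. -/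
def g : C → B := fun q => if q.2 then 1 else 0
/-- The section `r : B → A`, `0 ↦ 0`, `1 ↦ 1`. -/
def r : B → A := fun b => if b = 0 then 0 else 2
/-- The section `s : B → C`, `0 ↦ 0`, `1 ↦ 1`. -/
def s : B → C := fun b => if b = 0 then (false, false) else (true, true)
/-- `α = id : A → D`. -/
def α : A → A := id
/-- `γ : C → D`, `0 ↦ 0`, `a ↦ 1`, `b ↦ 1`, `1 ↦ 1`. -/
def γ : C → A := fun q => if q = (false, false) then 0 else 2

/-- The pullback `A ×_B C`, ordered componentwise. -/
abbrev P := {p : A × C // f p.1 = g p.2}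

theorem stmt13 :
    ¬ ∃ φ : P → A, Monotone φ ∧
      (∀ p : P, (p : A × C).2 = s (f (p : A × C).1) → φ p = α (p : A × C).1) ∧
      (∀ p : P, (p : A × C).1 = r (g (p : A × C).2) → φ p = γ (p : A × C).2) := by
  rintro ⟨φ, hmono, h1, h2⟩
  have hp1 : f (0 : A) = g ((true, false) : C) := by decide
  have hp2 : f (1 : A) = g ((true, true) : C) := by decide
  set p1 : P := ⟨((0 : A), (true, false)), hp1⟩
  set p2 : P := ⟨((1 : A), (true, true)), hp2⟩
  have e1 : φ p1 = 2 := by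
    have := h2 p1 rfl
    simpa [γ, p1] using this
  have e2 : φ p2 = 1 := by
    have := h1 p2 rfl
    simpa [α] using this
  have hle : p1 ≤ p2 := by
    constructor <;> simp [p1, p2]
  have := hmono hle
  rw [e1, e2] at this
  exact absurd this (by decide)

end Stmt13
end
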